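/- arXiv:0712.0338 — 14 statements merged into one kernel-verified Lean document; each statement's English description precedes it below -/
import Mathlib

section
/- For all x, y ∈ M: y ∈ cl(I⁺(x)) if and only if I⁺(y) ⊆ I⁺(x). In other words, (x,y) ∈ D⁺_f exactly when the chronological future of y is contained in the chronological future of x. -/
open Set Topology

/-- The chronological future of `x`: `I⁺(x) = {y | (x,y) ∈ I}`. -/
def chronFuture {M : Type*} (I : Set (M × M)) (x : M) : Set M := {y | (x, y) ∈ I}

/-- The chronological past of `y`: `I⁻(y) = {x | (x,y) ∈ I}`. -/
def chronPast {M : Type*} (I : Set (M × M)) (y : M) : Set M := {x | (x, y) ∈ I}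

/-- `D⁺_f = {(x,y) : y ∈ cl(I⁺(x))}`. -/
def Dfut {M : Type*} [TopologicalSpace M] (I : Set (M × M)) : Set (M × M) :=
  {p | p.2 ∈ closure (chronFuture I p.1)}

/-- `D⁺_p = {(x,y) : x ∈ cl(I⁻(y))}`. -/
def Dpast {M : Type*} [TopologicalSpace M] (I : Set (M × M)) : Set (M × M) :=
  {p | p.1 ∈ closure (chronPast I p.2)}

/-- `D⁺ = D⁺_f ∩ D⁺_p`. -/
def Dplus {M : Type*} [TopologicalSpace M] (I : Set (M × M)) : Set (M × M) :=
  Dfut I ∩ Dpast I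

/-- `(x,y) ∈ D⁺_f` iff `I⁺(y) ⊆ I⁺(x)`. -/
theorem dfut_iff_future_subset {M : Type*} [TopologicalSpace M] (I : Set (M × M))
    (hIopen : IsOpen I)
    (hItrans : ∀ x y z : M, (x, y) ∈ I → (y, z) ∈ I → (x, z) ∈ I)
    (hselfF : ∀ x : M, x ∈ closure (chronFuture I x))
    (hselfP : ∀ x : M, x ∈ closure (chronPast I x)) :
    ∀ x y : M, (x, y) ∈ Dfut I ↔ chronFuture I y ⊆ chronFuture I x := by
  intro x y
  constructor
  · intro hy z hz
    -- chronPast I z is open and contains y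
    have hopen : IsOpen (chronPast I z) :=
      hIopen.preimage (Continuous.prodMk_left z)
    have hmem : y ∈ chronPast I z := hz
    rcases mem_closure_iff.mp hy (chronPast I z) hopen hmem with ⟨w, hwz, hxw⟩
    exact hItrans x w z hxw hwz
  · intro hsub
    exact closure_mono hsub (hselfF y)
end

section
/- The relations D⁺_f, D⁺_p, and D⁺ are all reflexive and transitive (i.e. each is a preorder on M). -/
open Set Topology

/-- `D⁺_f`, `D⁺_p` and `D⁺` are reflexive and transitive. -/
theorem dfut_dpast_dplus_preorder {M : Type*} [TopologicalSpace M] (I : Set (M × M))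
    (hIopen : IsOpen I)
    (hItrans : ∀ x y z : M, (x, y) ∈ I → (y, z) ∈ I → (x, z) ∈ I)
    (hselfF : ∀ x : M, x ∈ closure (chronFuture I x))
    (hselfP : ∀ x : M, x ∈ closure (chronPast I x)) :
    (∀ x : M, (x, x) ∈ Dfut I) ∧
    (∀ x y z : M, (x, y) ∈ Dfut I → (y, z) ∈ Dfut I → (x, z) ∈ Dfut I) ∧
    (∀ x : M, (x, x) ∈ Dpast I) ∧
    (∀ x y z : M, (x, y) ∈ Dpast I → (y, z) ∈ Dpast I → (x, z) ∈ Dpast I) ∧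
    (∀ x : M, (x, x) ∈ Dplus I) ∧
    (∀ x y z : M, (x, y) ∈ Dplus I → (y, z) ∈ Dplus I → (x, z) ∈ Dplus I) := by
  -- push-up: y ∈ cl(I⁺(x)), (y,z) ∈ I ⇒ (x,z) ∈ I
  have pushF : ∀ x y z : M, y ∈ closure (chronFuture I x) → (y, z) ∈ I → (x, z) ∈ I := by
    intro x y z hy hyz
    have hopen : IsOpen {w : M | (w, z) ∈ I} :=
      hIopen.preimage (continuous_id.prodMk continuous_const)
    obtain ⟨w, hw1, hw2⟩ := mem_closure_iff.mp hy _ hopen hyz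
    exact hItrans x w z hw2 hw1
  have pushP : ∀ x y z : M, (x, y) ∈ I → y ∈ closure (chronPast I z) → (x, z) ∈ I := by
    intro x y z hxy hy
    have hopen : IsOpen {w : M | (x, w) ∈ I} :=
      hIopen.preimage (continuous_const.prodMk continuous_id)
    obtain ⟨w, hw1, hw2⟩ := mem_closure_iff.mp hy _ hopen hxy
    exact hItrans x w z hw1 hw2
  have ftrans : ∀ x y z : M, (x, y) ∈ Dfut I → (y, z) ∈ Dfut I → (x, z) ∈ Dfut I := by
    intro x y z hxy hyz
    have hsub : chronFuture I y ⊆ chronFuture I x := fun w hw => pushF x y w hxy hw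
    exact closure_mono hsub hyz
  have ptrans : ∀ x y z : M, (x, y) ∈ Dpast I → (y, z) ∈ Dpast I → (x, z) ∈ Dpast I := by
    intro x y z hxy hyz
    have hsub : chronPast I y ⊆ chronPast I z := fun w hw => pushP w y z hw hyz
    exact closure_mono hsub hxy
  refine ⟨fun x => hselfF x, ftrans, fun x => hselfP x, ptrans,
    fun x => ⟨hselfF x, hselfP x⟩, ?_⟩
  intro x y z ⟨h1, h2⟩ ⟨h3, h4⟩
  exact ⟨ftrans x y z h1 h3, ptrans x y z h2 h4⟩
end

section
/- The following are equivalent: (1) for all x, y ∈ M, if I⁺(x) = I⁺(y) and I⁻(x) = I⁻(y) then x = y (weak distinction); (2) the relation D⁺ is antisymmetric. -/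
open Set Topology

lemma future_subset_of_mem_closure {M : Type*} [TopologicalSpace M] (I : Set (M × M))
    (hIopen : IsOpen I) (hItrans : ∀ x y z : M, (x, y) ∈ I → (y, z) ∈ I → (x, z) ∈ I)
    {x y : M} (h : y ∈ closure (chronFuture I x)) :
    chronFuture I y ⊆ chronFuture I x := by
  intro z hz
  have hU : IsOpen {w : M | (w, z) ∈ I} :=
    hIopen.preimage (Continuous.prodMk continuous_id continuous_const)
  rcases mem_closure_iff.mp h _ hU hz with ⟨w, hw1, hw2⟩
  exact hItrans x w z hw2 hw1

lemma past_subset_of_mem_closure {M : Type*} [TopologicalSpace M] (I : Set (M × M))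
    (hIopen : IsOpen I) (hItrans : ∀ x y z : M, (x, y) ∈ I → (y, z) ∈ I → (x, z) ∈ I)
    {x y : M} (h : x ∈ closure (chronPast I y)) :
    chronPast I x ⊆ chronPast I y := by
  intro z hz
  have hU : IsOpen {w : M | (z, w) ∈ I} :=
    hIopen.preimage (Continuous.prodMk continuous_const continuous_id)
  rcases mem_closure_iff.mp h _ hU hz with ⟨w, hw1, hw2⟩
  exact hItrans z w y hw1 hw2

/-- weak distinction iff `D⁺` is antisymmetric. -/
theorem weakly_dist_iff_dplus_antisymm {M : Type*} [TopologicalSpace M] (I : Set (M × M))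
    (hIopen : IsOpen I)
    (hItrans : ∀ x y z : M, (x, y) ∈ I → (y, z) ∈ I → (x, z) ∈ I)
    (hselfF : ∀ x : M, x ∈ closure (chronFuture I x))
    (hselfP : ∀ x : M, x ∈ closure (chronPast I x)) :
    (∀ x y : M, chronFuture I x = chronFuture I y → chronPast I x = chronPast I y → x = y) ↔
    (∀ x y : M, (x, y) ∈ Dplus I → (y, x) ∈ Dplus I → x = y) := by
  constructor
  · intro hwd x y hxy hyx
    obtain ⟨hf1, hp1⟩ := hxy
    obtain ⟨hf2, hp2⟩ := hyx
    refine hwd x y ?_ ?_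
    · exact Subset.antisymm (future_subset_of_mem_closure I hIopen hItrans hf2)
        (future_subset_of_mem_closure I hIopen hItrans hf1)
    · exact Subset.antisymm (past_subset_of_mem_closure I hIopen hItrans hp1)
        (past_subset_of_mem_closure I hIopen hItrans hp2)
  · intro hanti x y hF hP
    refine hanti x y ⟨?_, ?_⟩ ⟨?_, ?_⟩
    · show y ∈ closure (chronFuture I x); rw [hF]; exact hselfF y
    · show x ∈ closure (chronPast I y); rw [← hP]; exact hselfP x
    · show x ∈ closure (chronFuture I y); rw [← hF]; exact hselfF x
    · show y ∈ closure (chronPast I x); rw [hP]; exact hselfP y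
end

section
/- Assume additionally that every chronology violation lies on a nontrivial loop: if (x,x) ∈ I then there exists y ≠ x with (x,y) ∈ I and (y,x) ∈ I (this holds for the chronological relation of any spacetime, since a closed timelike curve contains more than one point). Then the following are equivalent: (1) for all x, y ∈ M, if I⁺(x) = I⁺(y) and I⁻(x) = I⁻(y) then x = y (weak distinction); (2) the map x ↦ I⁺(x) ∪ I⁻(x) from M to subsets of M is injective. -/
open Set Topology

/-- assuming every chronology violation lies on a nontrivial loop,
weak distinction is equivalent to injectivity of `x ↦ I⁺(x) ∪ I⁻(x)`. -/
theorem weakly_dist_iff_union_injective {M : Type*} [TopologicalSpace M] (I : Set (M × M))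
    (hIopen : IsOpen I)
    (hItrans : ∀ x y z : M, (x, y) ∈ I → (y, z) ∈ I → (x, z) ∈ I)
    (hselfF : ∀ x : M, x ∈ closure (chronFuture I x))
    (hselfP : ∀ x : M, x ∈ closure (chronPast I x))
    (hLoop : ∀ x : M, (x, x) ∈ I → ∃ y : M, y ≠ x ∧ (x, y) ∈ I ∧ (y, x) ∈ I) :
    (∀ x y : M, chronFuture I x = chronFuture I y → chronPast I x = chronPast I y → x = y) ↔
    Function.Injective (fun x : M => chronFuture I x ∪ chronPast I x) := by
  constructor
  · intro hwd
    -- weak distinction implies irreflexivity of I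
    have irr : ∀ x : M, (x, x) ∉ I := by
      intro x hx
      obtain ⟨y, hyne, hxy, hyx⟩ := hLoop x hx
      apply hyne
      apply hwd y x
      · ext z
        simp only [chronFuture, Set.mem_setOf_eq]
        exact ⟨fun h => hItrans x y z hxy h, fun h => hItrans y x z hyx h⟩
      · ext z
        simp only [chronPast, Set.mem_setOf_eq]
        exact ⟨fun h => hItrans z y x h hyx, fun h => hItrans z x y h hxy⟩
    intro x y h
    simp only at h
    have hx : chronFuture I x ∪ chronPast I x = chronFuture I y ∪ chronPast I y := h
    -- generic claim: futures included
    have key : ∀ a b : M,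
        chronFuture I a ∪ chronPast I a = chronFuture I b ∪ chronPast I b →
        chronFuture I a ⊆ chronFuture I b := by
      intro a b hab z hz
      have hz' : z ∈ chronFuture I b ∪ chronPast I b := hab ▸ Set.mem_union_left _ hz
      rcases hz' with h1 | h1
      · exact h1
      · -- z ∈ P(b): a ≪ z ≪ b, so b ∈ F(a) ⊆ F(b) ∪ P(b), giving b ≪ b
        have hab' : (a, b) ∈ I := hItrans a z b hz h1
        have : b ∈ chronFuture I b ∪ chronPast I b :=
          hab ▸ Set.mem_union_left _ (show b ∈ chronFuture I a from hab')
        rcases this with h2 | h2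
        · exact absurd h2 (irr b)
        · exact absurd h2 (irr b)
    have keyP : ∀ a b : M,
        chronFuture I a ∪ chronPast I a = chronFuture I b ∪ chronPast I b →
        chronPast I a ⊆ chronPast I b := by
      intro a b hab z hz
      have hz' : z ∈ chronFuture I b ∪ chronPast I b := hab ▸ Set.mem_union_right _ hz
      rcases hz' with h1 | h1
      · have hba : (b, a) ∈ I := hItrans b z a h1 hz
        have : b ∈ chronFuture I b ∪ chronPast I b :=
          hab ▸ Set.mem_union_right _ (show b ∈ chronPast I a from hba)
        rcases this with h2 | h2
        · exact absurd h2 (irr b)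
        · exact absurd h2 (irr b)
      · exact h1
    exact hwd x y
      (Set.Subset.antisymm (key x y hx) (key y x hx.symm))
      (Set.Subset.antisymm (keyP x y hx) (keyP y x hx.symm))
  · intro hinj x y hF hP
    apply hinj
    simp only [hF, hP]
end

section
/- I is a left D⁺_p-ideal and a right D⁺_f-ideal: I ⊆ D⁺_p, and if (x,y) ∈ I and (y,z) ∈ D⁺_p then (x,z) ∈ I; likewise I ⊆ D⁺_f, and if (x,y) ∈ D⁺_f and (y,z) ∈ I then (x,z) ∈ I. Consequently I ⊆ D⁺ and both compositions with D⁺ remain in I. -/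
open Set Topology

/-- `I` is a left `D⁺_p`-ideal and a right `D⁺_f`-ideal,
hence a `D⁺`-ideal. -/
theorem chron_ideal {M : Type*} [TopologicalSpace M] (I : Set (M × M))
    (hIopen : IsOpen I)
    (hItrans : ∀ x y z : M, (x, y) ∈ I → (y, z) ∈ I → (x, z) ∈ I)
    (hselfF : ∀ x : M, x ∈ closure (chronFuture I x))
    (hselfP : ∀ x : M, x ∈ closure (chronPast I x)) :
    I ⊆ Dpast I ∧
    (∀ x y z : M, (x, y) ∈ I → (y, z) ∈ Dpast I → (x, z) ∈ I) ∧
    I ⊆ Dfut I ∧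
    (∀ x y z : M, (x, y) ∈ Dfut I → (y, z) ∈ I → (x, z) ∈ I) ∧
    I ⊆ Dplus I ∧
    (∀ x y z : M, (x, y) ∈ I → (y, z) ∈ Dplus I → (x, z) ∈ I) ∧
    (∀ x y z : M, (x, y) ∈ Dplus I → (y, z) ∈ I → (x, z) ∈ I) := by
  have hsubP : I ⊆ Dpast I := fun p hp =>
    subset_closure (by simpa [chronPast] using hp : p.1 ∈ chronPast I p.2)
  have hsubF : I ⊆ Dfut I := fun p hp =>
    subset_closure (by simpa [chronFuture] using hp : p.2 ∈ chronFuture I p.1)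
  have hFopen : ∀ x : M, IsOpen (chronFuture I x) := fun x =>
    hIopen.preimage (Continuous.prodMk_right x)
  have hPopen : ∀ z : M, IsOpen (chronPast I z) := fun z =>
    hIopen.preimage (continuous_id.prodMk continuous_const)
  have hR : ∀ x y z : M, (x, y) ∈ I → (y, z) ∈ Dpast I → (x, z) ∈ I := by
    intro x y z hxy hyz
    have hy : y ∈ closure (chronPast I z) := hyz
    rcases mem_closure_iff.mp hy (chronFuture I x) (hFopen x) hxy with ⟨w, hw1, hw2⟩
    exact hItrans x w z hw1 hw2
  have hL : ∀ x y z : M, (x, y) ∈ Dfut I → (y, z) ∈ I → (x, z) ∈ I := by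
    intro x y z hxy hyz
    have hy : y ∈ closure (chronFuture I x) := hxy
    rcases mem_closure_iff.mp hy (chronPast I z) (hPopen z) hyz with ⟨w, hw1, hw2⟩
    exact hItrans x w z hw2 hw1
  refine ⟨hsubP, hR, hsubF, hL, fun p hp => ⟨hsubF hp, hsubP hp⟩,
    fun x y z hxy hyz => hR x y z hxy hyz.2, fun x y z hxy hyz => hL x y z hxy.1 hyz⟩
end

section
/- D⁺_p is the largest relation R ⊆ M × M with the property that (x,y) ∈ I and (y,z) ∈ R imply (x,z) ∈ I; that is, any relation R with this property satisfies R ⊆ D⁺_p, and D⁺_p itself has the property. -/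
open Set Topology

/-- `D⁺_p` is the largest relation `R` with
`(x,y) ∈ I` and `(y,z) ∈ R` implying `(x,z) ∈ I`. -/
theorem dpast_largest {M : Type*} [TopologicalSpace M] (I : Set (M × M))
    (hIopen : IsOpen I)
    (hItrans : ∀ x y z : M, (x, y) ∈ I → (y, z) ∈ I → (x, z) ∈ I)
    (hselfF : ∀ x : M, x ∈ closure (chronFuture I x))
    (hselfP : ∀ x : M, x ∈ closure (chronPast I x)) :
    (∀ x y z : M, (x, y) ∈ I → (y, z) ∈ Dpast I → (x, z) ∈ I) ∧
    (∀ R : Set (M × M),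
      (∀ x y z : M, (x, y) ∈ I → (y, z) ∈ R → (x, z) ∈ I) → R ⊆ Dpast I) := by
  constructor
  · intro x y z hxy hyz
    have hopen : IsOpen (chronFuture I x) := hIopen.preimage (Continuous.prodMk_right x)
    have hy : y ∈ closure (chronPast I z) := hyz
    rcases mem_closure_iff.mp hy (chronFuture I x) hopen hxy with ⟨w, hw1, hw2⟩
    exact hItrans x w z hw1 hw2
  · intro R hR p hp
    obtain ⟨y, z⟩ := p
    have hsub : chronPast I y ⊆ chronPast I z := fun x hx => hR x y z hx hp
    exact closure_mono hsub (hselfP y)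
end

section
/- D⁺_f is the largest relation R ⊆ M × M with the property that (x,y) ∈ R and (y,z) ∈ I imply (x,z) ∈ I; that is, any relation R with this property satisfies R ⊆ D⁺_f, and D⁺_f itself has the property. -/
open Set Topology

/-- `D⁺_f` is the largest relation `R` with
`(x,y) ∈ R` and `(y,z) ∈ I` implying `(x,z) ∈ I`. -/
theorem dfut_largest {M : Type*} [TopologicalSpace M] (I : Set (M × M))
    (hIopen : IsOpen I)
    (hItrans : ∀ x y z : M, (x, y) ∈ I → (y, z) ∈ I → (x, z) ∈ I)
    (hselfF : ∀ x : M, x ∈ closure (chronFuture I x))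
    (hselfP : ∀ x : M, x ∈ closure (chronPast I x)) :
    (∀ x y z : M, (x, y) ∈ Dfut I → (y, z) ∈ I → (x, z) ∈ I) ∧
    (∀ R : Set (M × M),
      (∀ x y z : M, (x, y) ∈ R → (y, z) ∈ I → (x, z) ∈ I) → R ⊆ Dfut I) := by
  constructor
  · intro x y z hxy hyz
    have hV : IsOpen {w : M | (w, z) ∈ I} :=
      hIopen.preimage (Continuous.prodMk continuous_id continuous_const)
    rcases mem_closure_iff.mp hxy _ hV hyz with ⟨w, hwz, hxw⟩
    exact hItrans x w z hxw hwz
  · intro R hR p hp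
    show p.2 ∈ closure (chronFuture I p.1)
    rw [mem_closure_iff]
    intro U hU hyU
    rcases mem_closure_iff.mp (hselfF p.2) U hU hyU with ⟨w, hwU, hw⟩
    exact ⟨w, hwU, hR p.1 p.2 w hp hw⟩
end

section
/- D⁺ is the largest relation R ⊆ M × M satisfying both ideal properties: if R is any relation such that ((x,y) ∈ I and (y,z) ∈ R imply (x,z) ∈ I) and ((x,y) ∈ R and (y,z) ∈ I imply (x,z) ∈ I), then R ⊆ D⁺; and D⁺ itself satisfies both properties. In particular, for any Kronheimer–Penrose causal structure (M, R, I), i.e. any reflexive, transitive, antisymmetric R with I ⊆ R satisfying both ideal properties, one has R ⊆ D⁺. -/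
open Set Topology

/-- `D⁺` is the largest relation satisfying both ideal properties;
in particular any Kronheimer–Penrose causal structure `(M, R, I)` has `R ⊆ D⁺`. -/
theorem dplus_largest {M : Type*} [TopologicalSpace M] (I : Set (M × M))
    (hIopen : IsOpen I)
    (hItrans : ∀ x y z : M, (x, y) ∈ I → (y, z) ∈ I → (x, z) ∈ I)
    (hselfF : ∀ x : M, x ∈ closure (chronFuture I x))
    (hselfP : ∀ x : M, x ∈ closure (chronPast I x)) :
    (∀ x y z : M, (x, y) ∈ I → (y, z) ∈ Dplus I → (x, z) ∈ I) ∧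
    (∀ x y z : M, (x, y) ∈ Dplus I → (y, z) ∈ I → (x, z) ∈ I) ∧
    (∀ R : Set (M × M),
      (∀ x y z : M, (x, y) ∈ I → (y, z) ∈ R → (x, z) ∈ I) →
      (∀ x y z : M, (x, y) ∈ R → (y, z) ∈ I → (x, z) ∈ I) → R ⊆ Dplus I) ∧
    (∀ R : Set (M × M),
      (∀ x : M, (x, x) ∈ R) →
      (∀ x y z : M, (x, y) ∈ R → (y, z) ∈ R → (x, z) ∈ R) →
      (∀ x y : M, (x, y) ∈ R → (y, x) ∈ R → x = y) →
      I ⊆ R →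
      (∀ x y z : M, (x, y) ∈ I → (y, z) ∈ R → (x, z) ∈ I) →
      (∀ x y z : M, (x, y) ∈ R → (y, z) ∈ I → (x, z) ∈ I) → R ⊆ Dplus I) := by

  have hopenF : ∀ x : M, IsOpen {w : M | (x, w) ∈ I} := fun x =>
    hIopen.preimage (Continuous.prodMk_right x)
  have hopenP : ∀ z : M, IsOpen {w : M | (w, z) ∈ I} := fun z =>
    hIopen.preimage (continuous_id.prodMk continuous_const)
  have h1 : ∀ x y z : M, (x, y) ∈ I → (y, z) ∈ Dplus I → (x, z) ∈ I := by
    intro x y z hxy hyz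
    obtain ⟨w, hw1, hw2⟩ := mem_closure_iff.mp hyz.2 _ (hopenF x) hxy
    exact hItrans x w z hw1 hw2
  have h2 : ∀ x y z : M, (x, y) ∈ Dplus I → (y, z) ∈ I → (x, z) ∈ I := by
    intro x y z hxy hyz
    obtain ⟨w, hw1, hw2⟩ := mem_closure_iff.mp hxy.1 _ (hopenP z) hyz
    exact hItrans x w z hw2 hw1
  have h3 : ∀ R : Set (M × M),
      (∀ x y z : M, (x, y) ∈ I → (y, z) ∈ R → (x, z) ∈ I) →
      (∀ x y z : M, (x, y) ∈ R → (y, z) ∈ I → (x, z) ∈ I) → R ⊆ Dplus I := by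
    intro R hA hB p hp
    obtain ⟨x, y⟩ := p
    constructor
    · exact closure_mono (fun w hw => hB x y w hp hw) (hselfF y)
    · exact closure_mono (fun w hw => hA w x y hw hp) (hselfP x)
  exact ⟨h1, h2, h3, fun R _ _ _ _ hA hB => h3 R hA hB⟩
end

section
/- The following two conditions are equivalent (Lemma 4 of the paper, defining feeble distinction): (1) for all x, y ∈ M, if (x,y) ∈ J, I⁺(x) = I⁺(y), and I⁻(x) = I⁻(y), then x = y; (2) for all x, y ∈ M, if (x,y) ∈ J and (y,x) ∈ D⁺, then x = y. -/
open Set Topology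

/-- the two formulations of feeble distinction are equivalent. -/
theorem feeble_dist_iff {M : Type*} [TopologicalSpace M] (I J : Set (M × M))
    (hIopen : IsOpen I)
    (hItrans : ∀ x y z : M, (x, y) ∈ I → (y, z) ∈ I → (x, z) ∈ I)
    (hselfF : ∀ x : M, x ∈ closure (chronFuture I x))
    (hselfP : ∀ x : M, x ∈ closure (chronPast I x))
    (hJrefl : ∀ x : M, (x, x) ∈ J)
    (hJtrans : ∀ x y z : M, (x, y) ∈ J → (y, z) ∈ J → (x, z) ∈ J)
    (hIJ : I ⊆ J)
    (hPushUp : ∀ x y z : M, (x, y) ∈ I → (y, z) ∈ J → (x, z) ∈ I)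
    (hPushDown : ∀ x y z : M, (x, y) ∈ J → (y, z) ∈ I → (x, z) ∈ I) :
    (∀ x y : M, (x, y) ∈ J → chronFuture I x = chronFuture I y →
      chronPast I x = chronPast I y → x = y) ↔
    (∀ x y : M, (x, y) ∈ J → (y, x) ∈ Dplus I → x = y) := by
  constructor
  · intro h x y hJ hD
    obtain ⟨hf, hp⟩ := hD
    -- hf : x ∈ closure (chronFuture I y), hp : y ∈ closure (chronPast I x)
    apply h x y hJ
    · -- chronFuture I x = chronFuture I y
      apply Set.Subset.antisymm
      · intro z hz
        -- (x,z) ∈ I; find product nbhd of (x,z) in I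
        obtain ⟨u, v, hu, hv, hxu, hzv, huv⟩ := isOpen_prod_iff.mp hIopen x z hz
        obtain ⟨w, hwu, hww⟩ := mem_closure_iff.mp hf u hu hxu
        exact hItrans y w z hww (huv ⟨hwu, hzv⟩)
      · intro z hz
        exact hPushDown x y z hJ hz
    · apply Set.Subset.antisymm
      · intro w hw
        exact hPushUp w x y hw hJ
      · intro w hw
        -- (w,y) ∈ I, y ∈ cl(chronPast I x)
        obtain ⟨u, v, hu, hv, hwu, hyv, huv⟩ := isOpen_prod_iff.mp hIopen w y hw
        obtain ⟨z, hzv, hzx⟩ := mem_closure_iff.mp hp v hv hyv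
        exact hItrans w z x (huv ⟨hwu, hzv⟩) hzx
  · intro h x y hJ hfut hpast
    apply h x y hJ
    constructor
    · show x ∈ closure (chronFuture I y)
      rw [← hfut]; exact hselfF x
    · show y ∈ closure (chronPast I x)
      rw [hpast]; exact hselfP y
end

section
/- If the space is weakly distinguishing, then it is feebly distinguishing; that is, if D⁺ is antisymmetric, then for all x, y ∈ M, (x,y) ∈ J and (y,x) ∈ D⁺ imply x = y. -/
open Set Topology

/-- weak distinction implies feeble distinction. -/
theorem feebly_dist_of_weakly_dist {M : Type*} [TopologicalSpace M] (I J : Set (M × M))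
    (hIopen : IsOpen I)
    (hItrans : ∀ x y z : M, (x, y) ∈ I → (y, z) ∈ I → (x, z) ∈ I)
    (hselfF : ∀ x : M, x ∈ closure (chronFuture I x))
    (hselfP : ∀ x : M, x ∈ closure (chronPast I x))
    (hJrefl : ∀ x : M, (x, x) ∈ J)
    (hJtrans : ∀ x y z : M, (x, y) ∈ J → (y, z) ∈ J → (x, z) ∈ J)
    (hIJ : I ⊆ J)
    (hPushUp : ∀ x y z : M, (x, y) ∈ I → (y, z) ∈ J → (x, z) ∈ I)
    (hPushDown : ∀ x y z : M, (x, y) ∈ J → (y, z) ∈ I → (x, z) ∈ I)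
    (hWeak : ∀ x y : M, (x, y) ∈ Dplus I → (y, x) ∈ Dplus I → x = y) :
    ∀ x y : M, (x, y) ∈ J → (y, x) ∈ Dplus I → x = y := by
  intro x y hJxy hD
  apply hWeak x y _ hD
  constructor
  · show (x,y).2 ∈ closure (chronFuture I (x,y).1)
    -- y ∈ closure (chronFuture I x)
    show _ ∈ closure _
    rw [mem_closure_iff]
    intro U hU hyU
    rcases mem_closure_iff.mp (hselfF y) U hU hyU with ⟨z, hzU, hzF⟩
    exact ⟨z, hzU, hPushDown x y z hJxy hzF⟩
  · show (x,y).1 ∈ closure (chronPast I (x,y).2)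
    -- x ∈ closure (chronPast I y)
    show _ ∈ closure _
    rw [mem_closure_iff]
    intro U hU hxU
    rcases mem_closure_iff.mp (hselfP x) U hU hxU with ⟨w, hwU, hwP⟩
    exact ⟨w, hwU, hPushUp w x y hwP hJxy⟩
end

section
/- If the space is feebly distinguishing, then it is causal; that is, if for all x, y ∈ M, (x,y) ∈ J and (y,x) ∈ D⁺ imply x = y, then J is antisymmetric. -/
open Set Topology

/-- feeble distinction implies causality (`J` antisymmetric). -/
theorem causal_of_feebly_dist {M : Type*} [TopologicalSpace M] (I J : Set (M × M))
    (hIopen : IsOpen I)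
    (hItrans : ∀ x y z : M, (x, y) ∈ I → (y, z) ∈ I → (x, z) ∈ I)
    (hselfF : ∀ x : M, x ∈ closure (chronFuture I x))
    (hselfP : ∀ x : M, x ∈ closure (chronPast I x))
    (hJrefl : ∀ x : M, (x, x) ∈ J)
    (hJtrans : ∀ x y z : M, (x, y) ∈ J → (y, z) ∈ J → (x, z) ∈ J)
    (hIJ : I ⊆ J)
    (hPushUp : ∀ x y z : M, (x, y) ∈ I → (y, z) ∈ J → (x, z) ∈ I)
    (hPushDown : ∀ x y z : M, (x, y) ∈ J → (y, z) ∈ I → (x, z) ∈ I)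
    (hFeeble : ∀ x y : M, (x, y) ∈ J → (y, x) ∈ Dplus I → x = y) :
    ∀ x y : M, (x, y) ∈ J → (y, x) ∈ J → x = y := by
  intro x y hxy hyx
  apply hFeeble x y hxy
  constructor
  · exact closure_mono (fun z hz => hPushDown y x z hyx hz) (hselfF x)
  · exact closure_mono (fun z hz => hPushUp z y x hz hyx) (hselfP y)
end

section
/- If the space is future reflecting (D⁺_f = A⁺) then D⁺ = D⁺_p; symmetrically, if the space is past reflecting (D⁺_p = A⁺) then D⁺ = D⁺_f (first part of Theorem 2 of the paper). -/
open Set Topology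

/-- `A⁺ = cl(J)`, the closure of the causal relation in `M × M`. -/
def Aplus {M : Type*} [TopologicalSpace M] (J : Set (M × M)) : Set (M × M) :=
  closure J

/-- future reflectivity gives `D⁺ = D⁺_p`; past reflectivity
gives `D⁺ = D⁺_f`. -/
theorem dplus_eq_of_reflecting {M : Type*} [TopologicalSpace M] (I J : Set (M × M))
    (hIopen : IsOpen I)
    (hItrans : ∀ x y z : M, (x, y) ∈ I → (y, z) ∈ I → (x, z) ∈ I)
    (hselfF : ∀ x : M, x ∈ closure (chronFuture I x))
    (hselfP : ∀ x : M, x ∈ closure (chronPast I x))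
    (hJrefl : ∀ x : M, (x, x) ∈ J)
    (hJtrans : ∀ x y z : M, (x, y) ∈ J → (y, z) ∈ J → (x, z) ∈ J)
    (hIJ : I ⊆ J)
    (hPushUp : ∀ x y z : M, (x, y) ∈ I → (y, z) ∈ J → (x, z) ∈ I)
    (hPushDown : ∀ x y z : M, (x, y) ∈ J → (y, z) ∈ I → (x, z) ∈ I) :
    (Dfut I = Aplus J → Dplus I = Dpast I) ∧
    (Dpast I = Aplus J → Dplus I = Dfut I) := by
  have hP : Dpast I ⊆ Aplus J := by
    rintro ⟨x, y⟩ hx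
    have : (x, y) ∈ closure I := by
      have hc : Continuous fun a : M => (a, y) := by fun_prop
      have h2 := map_mem_closure (t := I) hc hx fun a ha => ha
      exact h2
    exact closure_mono hIJ this
  have hF : Dfut I ⊆ Aplus J := by
    rintro ⟨x, y⟩ hy
    have : (x, y) ∈ closure I := by
      have hc : Continuous fun b : M => (x, b) := by fun_prop
      have h2 := map_mem_closure (t := I) hc hy fun b hb => hb
      exact h2
    exact closure_mono hIJ this
  constructor
  · intro h
    apply Set.eq_of_subset_of_subset (Set.inter_subset_right)
    intro p hp
    exact ⟨h ▸ hP hp, hp⟩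
  · intro h
    apply Set.eq_of_subset_of_subset (Set.inter_subset_left)
    intro p hp
    exact ⟨hp, h ▸ hF hp⟩
end

section
/- If the space is feebly distinguishing and future reflecting (D⁺_f = A⁺), then any two causally related points with the same chronological past coincide: for all x, y ∈ M, (x,y) ∈ J and I⁻(x) = I⁻(y) imply x = y. Symmetrically, if the space is feebly distinguishing and past reflecting (D⁺_p = A⁺), then any two causally related points with the same chronological future coincide: (x,y) ∈ J and I⁺(x) = I⁺(y) imply x = y. (In a spacetime these conclusions are equivalent to past and future distinction respectively; this is the second part of Theorem 2 of the paper.) -/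
open Set Topology

/-- feeble distinction plus future (past) reflectivity implies
past (resp. future) distinction along causally related pairs. -/
theorem dist_of_feeble_and_reflecting {M : Type*} [TopologicalSpace M] (I J : Set (M × M))
    (hIopen : IsOpen I)
    (hItrans : ∀ x y z : M, (x, y) ∈ I → (y, z) ∈ I → (x, z) ∈ I)
    (hselfF : ∀ x : M, x ∈ closure (chronFuture I x))
    (hselfP : ∀ x : M, x ∈ closure (chronPast I x))
    (hJrefl : ∀ x : M, (x, x) ∈ J)
    (hJtrans : ∀ x y z : M, (x, y) ∈ J → (y, z) ∈ J → (x, z) ∈ J)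
    (hIJ : I ⊆ J)
    (hPushUp : ∀ x y z : M, (x, y) ∈ I → (y, z) ∈ J → (x, z) ∈ I)
    (hPushDown : ∀ x y z : M, (x, y) ∈ J → (y, z) ∈ I → (x, z) ∈ I)
    (hFeeble : ∀ x y : M, (x, y) ∈ J → (y, x) ∈ Dplus I → x = y) :
    (Dfut I = Aplus J →
      ∀ x y : M, (x, y) ∈ J → chronPast I x = chronPast I y → x = y) ∧
    (Dpast I = Aplus J →
      ∀ x y : M, (x, y) ∈ J → chronFuture I x = chronFuture I y → x = y) := by
  constructor
  · intro hFR x y hxy hPasts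
    apply hFeeble x y hxy
    constructor
    · -- (y,x) ∈ Dfut I = closure J
      rw [hFR]
      rw [Aplus, mem_closure_iff_nhds]
      intro t ht
      rw [mem_nhds_prod_iff] at ht
      obtain ⟨V, hV, W, hW, hVW⟩ := ht
      have := (mem_closure_iff_nhds.mp (hselfP y)) V hV
      obtain ⟨y', hy'V, hy'P⟩ := this
      have hy'Px : y' ∈ chronPast I x := by rw [hPasts]; exact hy'P
      exact ⟨(y', x), hVW ⟨hy'V, mem_of_mem_nhds hW⟩, hIJ hy'Px⟩
    · -- (y,x) ∈ Dpast I : y ∈ closure (chronPast I x)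
      show y ∈ closure (chronPast I x)
      rw [hPasts]
      exact hselfP y
  · intro hPR x y hxy hFuts
    apply hFeeble x y hxy
    constructor
    · -- (y,x) ∈ Dfut I : x ∈ closure (chronFuture I y)
      show x ∈ closure (chronFuture I y)
      rw [← hFuts]
      exact hselfF x
    · -- (y,x) ∈ Dpast I = closure J
      rw [hPR]
      rw [Aplus, mem_closure_iff_nhds]
      intro t ht
      rw [mem_nhds_prod_iff] at ht
      obtain ⟨V, hV, W, hW, hVW⟩ := ht
      have := (mem_closure_iff_nhds.mp (hselfF x)) W hW
      obtain ⟨x', hx'W, hx'F⟩ := this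
      have hx'Fy : x' ∈ chronFuture I y := by rw [← hFuts]; exact hx'F
      exact ⟨(y, x'), hVW ⟨mem_of_mem_nhds hV, hx'W⟩, hIJ hx'Fy⟩
end

section
/- If the space is feebly distinguishing and reflecting (D⁺_f = A⁺ and D⁺_p = A⁺), then distinct causally related points have distinct chronological futures and distinct chronological pasts: for all x, y ∈ M with (x,y) ∈ J, if I⁺(x) = I⁺(y) then x = y, and if I⁻(x) = I⁻(y) then x = y. (In a spacetime this yields full distinction and hence causal continuity; this is the abstract content of the paper's Corollary 1.) -/
open Set Topology

/-- feeble distinction plus reflectivity gives full distinction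
along causally related pairs (abstract form of causal continuity). -/
theorem causally_continuous_of_feeble_reflecting {M : Type*} [TopologicalSpace M]
    (I J : Set (M × M))
    (hIopen : IsOpen I)
    (hItrans : ∀ x y z : M, (x, y) ∈ I → (y, z) ∈ I → (x, z) ∈ I)
    (hselfF : ∀ x : M, x ∈ closure (chronFuture I x))
    (hselfP : ∀ x : M, x ∈ closure (chronPast I x))
    (hJrefl : ∀ x : M, (x, x) ∈ J)
    (hJtrans : ∀ x y z : M, (x, y) ∈ J → (y, z) ∈ J → (x, z) ∈ J)
    (hIJ : I ⊆ J)
    (hPushUp : ∀ x y z : M, (x, y) ∈ I → (y, z) ∈ J → (x, z) ∈ I)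
    (hPushDown : ∀ x y z : M, (x, y) ∈ J → (y, z) ∈ I → (x, z) ∈ I)
    (hFeeble : ∀ x y : M, (x, y) ∈ J → (y, x) ∈ Dplus I → x = y)
    (hFR : Dfut I = Aplus J) (hPR : Dpast I = Aplus J) :
    ∀ x y : M, (x, y) ∈ J →
      ((chronFuture I x = chronFuture I y → x = y) ∧
       (chronPast I x = chronPast I y → x = y)) := by
  intro x y hxy
  constructor
  · intro hF
    have hyx : (y, x) ∈ Dfut I := by
      simp only [Dfut, Set.mem_setOf_eq, ← hF]
      exact hselfF x
    rw [hFR, ← hPR] at hyx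
    exact hFeeble x y hxy ⟨by rw [hFR, ← hPR]; exact hyx, hyx⟩
  · intro hP
    have hyx : (y, x) ∈ Dpast I := by
      simp only [Dpast, Set.mem_setOf_eq, hP]
      exact hselfP y
    rw [hPR, ← hFR] at hyx
    exact hFeeble x y hxy ⟨hyx, by rw [hPR, ← hFR]; exact hyx⟩
end
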